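/- (Poincaré card shuffling / random walk on a finite group) Let G be a finite group and μ a probability measure on G whose support generates G and is not contained in a coset of a proper normal subgroup (equivalently, the walk is irreducible and aperiodic). Then the n-fold convolution μ^{*n} converges to the uniform distribution on G as n → ∞. -/

import Mathlib

open Filter Topology

/-- `n`-fold convolution power of a probability mass function on a finite group. -/
def convPow {G : Type*} [Group G] [Fintype G] [DecidableEq G]
    (μ : G → ℝ) : ℕ → G → ℝ
  | 0 => fun g => if g = 1 then 1 else 0
  | n + 1 => fun g => ∑ h, μ h * convPow μ n (h⁻¹ * g)

namespace RWAux
variable {G : Type*} [Group G] [Fintype G] [DecidableEq G]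

lemma convPow_zero (μ : G → ℝ) (g : G) : convPow μ 0 g = if g = 1 then 1 else 0 := rfl

lemma convPow_succ (μ : G → ℝ) (n : ℕ) (g : G) :
    convPow μ (n+1) g = ∑ h, μ h * convPow μ n (h⁻¹ * g) := rfl

lemma convPow_nonneg {μ : G → ℝ} (hμ : ∀ g, 0 ≤ μ g) : ∀ (n : ℕ) (g : G), 0 ≤ convPow μ n g
  | 0, g => by rw [convPow_zero]; split <;> norm_num
  | n+1, g => Finset.sum_nonneg fun h _ => mul_nonneg (hμ h) (convPow_nonneg hμ n _)

omit [DecidableEq G] in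
lemma sum_shift (f : G → ℝ) (h : G) : ∑ g, f (h⁻¹ * g) = ∑ g, f g := by
  exact Equiv.sum_comp (Equiv.mulLeft h⁻¹) f

lemma sum_convPow {μ : G → ℝ} (h1 : ∑ g, μ g = 1) : ∀ n : ℕ, ∑ g, convPow μ n g = 1
  | 0 => by simp [convPow_zero]
  | n+1 => by
    simp only [convPow_succ]
    rw [Finset.sum_comm]
    have : ∀ h : G, ∑ g, μ h * convPow μ n (h⁻¹ * g) = μ h := by
      intro h
      rw [← Finset.mul_sum, sum_shift (convPow μ n) h, sum_convPow h1 n, mul_one]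
    simp only [this, h1]

lemma convPow_add (μ : G → ℝ) : ∀ (m n : ℕ) (g : G),
    convPow μ (m + n) g = ∑ h, convPow μ m h * convPow μ n (h⁻¹ * g)
  | 0, n, g => by
    rw [Nat.zero_add]
    rw [Finset.sum_eq_single 1]
    · simp [convPow_zero]
    · intro b _ hb; simp [convPow_zero, hb]
    · simp
  | m+1, n, g => by
    have e : m + 1 + n = (m + n) + 1 := by ring
    rw [e, convPow_succ]
    have step : ∀ h : G, μ h * convPow μ (m + n) (h⁻¹ * g)
        = ∑ k, μ h * (convPow μ m k * convPow μ n (k⁻¹ * (h⁻¹ * g))) := by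
      intro h
      rw [convPow_add μ m n (h⁻¹ * g), Finset.mul_sum]
    simp only [step]
    symm
    simp only [convPow_succ, Finset.sum_mul]
    rw [Finset.sum_comm]
    apply Finset.sum_congr rfl
    intro h _
    apply Fintype.sum_equiv (Equiv.mulLeft h).symm
    intro x
    simp only [Equiv.mulLeft_symm, Equiv.coe_mulLeft, mul_inv_rev]
    simp only [inv_inv, mul_assoc, mul_inv_cancel_left]

section Pos
variable {μ : G → ℝ} (hnonneg : ∀ g, 0 ≤ μ g)

lemma pos_zero_one : 0 < convPow μ 0 (1:G) := by simp [convPow_zero]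

lemma convPow_one_eq (μ : G → ℝ) (g : G) : convPow μ 1 g = μ g := by
  rw [convPow_succ]
  rw [Finset.sum_eq_single g]
  · simp [convPow_zero]
  · intro b _ hb
    simp [convPow_zero, inv_mul_eq_one, hb]
  · simp

include hnonneg

lemma pos_mul {m n : ℕ} {a b : G} (hm : 0 < convPow μ m a) (hn : 0 < convPow μ n b) :
    0 < convPow μ (m + n) (a * b) := by
  rw [convPow_add]
  apply Finset.sum_pos'
  · intro h _
    exact mul_nonneg (convPow_nonneg hnonneg m h) (convPow_nonneg hnonneg n _)
  · refine ⟨a, Finset.mem_univ a, ?_⟩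
    rw [inv_mul_cancel_left]
    exact mul_pos hm hn

lemma pos_pow {n : ℕ} {g : G} (h : 0 < convPow μ n g) :
    ∀ j : ℕ, 0 < convPow μ (n * j) (g ^ j)
  | 0 => by simpa using pos_zero_one
  | j+1 => by
    have := pos_mul hnonneg (pos_pow h j) h
    rw [show n * j + n = n * (j+1) by ring] at this
    rw [pow_succ]
    exact this

lemma pos_inv {n : ℕ} {g : G} (h : 0 < convPow μ n g) :
    0 < convPow μ (n * (orderOf g - 1)) g⁻¹ := by
  have hk : 1 ≤ orderOf g := orderOf_pos g
  have hpow : g ^ (orderOf g - 1) = g⁻¹ := by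
    apply eq_inv_of_mul_eq_one_left
    rw [← pow_succ]
    rw [show orderOf g - 1 + 1 = orderOf g from Nat.sub_add_cancel hk]
    exact pow_orderOf_eq_one g
  have := pos_pow hnonneg h (orderOf g - 1)
  rwa [hpow] at this

/-- The set of group elements reachable by the walk in some number of steps. -/
def reachable : Subgroup G where
  carrier := {g | ∃ n : ℕ, 0 < convPow μ n g}
  one_mem' := ⟨0, pos_zero_one⟩
  mul_mem' := fun ⟨m, hm⟩ ⟨n, hn⟩ => ⟨m + n, pos_mul hnonneg hm hn⟩
  inv_mem' := fun ⟨n, hn⟩ => ⟨_, pos_inv hnonneg hn⟩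

lemma reachable_eq_top (hgen : Subgroup.closure (Function.support μ) = ⊤) :
    reachable hnonneg = ⊤ := by
  rw [eq_top_iff, ← hgen]
  rw [Subgroup.closure_le]
  intro s hs
  exact ⟨1, by rw [convPow_one_eq]; exact lt_of_le_of_ne (hnonneg s) (Ne.symm hs)⟩


theorem exists_pos_N (hsum : ∑ g, μ g = 1)
    (hgen : Subgroup.closure (Function.support μ) = ⊤)
    (hcoset : ¬ ∃ (H : Subgroup G), H.Normal ∧ H ≠ ⊤ ∧
      ∃ g : G, Function.support μ ⊆ (fun h => g * h) '' (H : Set G)) :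
    ∃ N : ℕ, 1 ≤ N ∧ ∀ g : G, 0 < convPow μ N g := by
  classical
  set R : Set ℕ := {n | 0 < convPow μ n (1:G)} with hRdef
  have hR0 : 0 ∈ R := pos_zero_one
  have hRadd : ∀ {a b : ℕ}, a ∈ R → b ∈ R → a + b ∈ R := by
    intro a b ha hb
    have := pos_mul hnonneg ha hb
    simpa [hRdef] using this
  have hex : ∃ s, μ s ≠ 0 := by
    by_contra hc
    push_neg at hc
    simp [hc] at hsum
  obtain ⟨s, hs⟩ := hex
  have hs1 : 0 < convPow μ 1 s := by
    rw [convPow_one_eq]; exact lt_of_le_of_ne (hnonneg s) (Ne.symm hs)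
  have hordR : orderOf s ∈ R := by
    have := pos_pow hnonneg hs1 (orderOf s)
    simpa [pow_orderOf_eq_one, hRdef] using this
  have hord1 : 1 ≤ orderOf s := orderOf_pos s
  obtain ⟨d, hd⟩ := Int.subgroup_cyclic (AddSubgroup.closure ((fun n : ℕ => (n:ℤ)) '' R))
  have hdvd : ∀ n ∈ R, d ∣ (n : ℤ) := by
    intro n hn
    have h1 : (n:ℤ) ∈ AddSubgroup.closure ((fun n : ℕ => (n:ℤ)) '' R) :=
      AddSubgroup.subset_closure ⟨n, hn, rfl⟩
    rw [hd, AddSubgroup.mem_closure_singleton] at h1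
    obtain ⟨k, hk⟩ := h1
    exact ⟨k, by rw [← hk]; simp [mul_comm]⟩
  have hreach : ∀ g : G, ∃ n, 0 < convPow μ n g := by
    intro g
    have hg : g ∈ reachable hnonneg := by
      rw [reachable_eq_top hnonneg hgen]; trivial
    exact hg
  -- the subgroup H of elements reachable at times divisible by d
  let H : Subgroup G :=
    { carrier := {g | ∃ n : ℕ, 0 < convPow μ n g ∧ d ∣ (n:ℤ)}
      one_mem' := ⟨0, pos_zero_one, by simp⟩
      mul_mem' := by
        rintro a b ⟨m, hm, hdm⟩ ⟨n, hn, hdn⟩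
        exact ⟨m + n, pos_mul hnonneg hm hn, by push_cast; exact dvd_add hdm hdn⟩
      inv_mem' := by
        rintro a ⟨n, hn, hdn⟩
        refine ⟨n * (orderOf a - 1), pos_inv hnonneg hn, ?_⟩
        push_cast
        exact Dvd.dvd.mul_right hdn _ }
  have hmemH : ∀ g : G, g ∈ H ↔ ∃ n : ℕ, 0 < convPow μ n g ∧ d ∣ (n:ℤ) := fun g => Iff.rfl
  have hHnormal : H.Normal := by
    constructor
    intro h hh g
    obtain ⟨m, hm, hdm⟩ := (hmemH h).mp hh
    obtain ⟨a, ha⟩ := hreach g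
    obtain ⟨b, hb⟩ := hreach g⁻¹
    have habR : a + b ∈ R := by simpa [hRdef] using pos_mul hnonneg ha hb
    refine (hmemH _).mpr ⟨a + m + b, ?_, ?_⟩
    · have := pos_mul hnonneg (pos_mul hnonneg ha hm) hb
      simpa [mul_assoc] using this
    · have h1 := hdvd _ habR
      push_cast at h1 ⊢
      have he : ((a:ℤ) + m + b) = ((a:ℤ) + b) + m := by ring
      rw [he]
      exact dvd_add h1 hdm
  have hsinv : 0 < convPow μ (1 * (orderOf s - 1)) s⁻¹ := pos_inv hnonneg hs1
  have hsub : Function.support μ ⊆ (fun h => s * h) '' (H : Set G) := by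
    intro t ht
    refine ⟨s⁻¹ * t, ?_, by simp⟩
    have ht1 : 0 < convPow μ 1 t := by
      rw [convPow_one_eq]; exact lt_of_le_of_ne (hnonneg t) (Ne.symm ht)
    refine (hmemH _).mpr ⟨1 * (orderOf s - 1) + 1, pos_mul hnonneg hsinv ht1, ?_⟩
    have he : (1 * (orderOf s - 1) + 1 : ℕ) = orderOf s := by omega
    rw [he]
    exact hdvd _ hordR
  have hHtop : H = ⊤ := by
    by_contra hne
    exact hcoset ⟨H, hHnormal, hne, s, hsub⟩
  have hsH : s ∈ H := by rw [hHtop]; trivial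
  obtain ⟨n, hns, hdn⟩ := (hmemH s).mp hsH
  have h2R : n + 1 * (orderOf s - 1) ∈ R := by
    simpa [hRdef] using pos_mul hnonneg hns hsinv
  have hd1 : d ∣ 1 := by
    have hA := hdvd _ h2R
    have hB := hdvd _ hordR
    have hcast : ((n + 1 * (orderOf s - 1) : ℕ) : ℤ) = (n:ℤ) + ((orderOf s : ℤ) - 1) := by
      push_cast [hord1]
      ring
    rw [hcast] at hA
    have hC : d ∣ ((orderOf s : ℤ) - 1) := (dvd_add_right hdn).mp hA
    have := dvd_sub hB hC
    simpa using this
  -- consecutive elements of R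
  have h1mem : (1:ℤ) ∈ AddSubgroup.closure ((fun n : ℕ => (n:ℤ)) '' R) := by
    rw [hd, AddSubgroup.mem_closure_singleton]
    obtain ⟨c, hc⟩ := hd1
    exact ⟨c, by rw [hc]; simp [mul_comm]⟩
  have hdiff : ∀ z ∈ AddSubgroup.closure ((fun n : ℕ => (n:ℤ)) '' R),
      ∃ a ∈ R, ∃ b ∈ R, z = (a:ℤ) - b := by
    intro z hz
    induction hz using AddSubgroup.closure_induction with
    | mem x hx =>
      obtain ⟨a, haR, rfl⟩ := hx
      exact ⟨a, haR, 0, hR0, by simp⟩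
    | zero => exact ⟨0, hR0, 0, hR0, by simp⟩
    | add x y hx hy ihx ihy =>
      obtain ⟨a, haR, b, hbR, rfl⟩ := ihx
      obtain ⟨a', haR', b', hbR', rfl⟩ := ihy
      exact ⟨a + a', hRadd haR haR', b + b', hRadd hbR hbR', by push_cast; ring⟩
    | neg x hx ihx =>
      obtain ⟨a, haR, b, hbR, rfl⟩ := ihx
      exact ⟨b, hbR, a, haR, by ring⟩
  obtain ⟨a, haR, b, hbR, hab⟩ := hdiff 1 h1mem
  have hab' : a = b + 1 := by
    have : (a:ℤ) = (b:ℤ) + 1 := by linarith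
    exact_mod_cast this
  set n1 : ℕ := b + orderOf s with hn1def
  have hn1R : n1 ∈ R := hRadd hbR hordR
  have hn1R' : n1 + 1 ∈ R := by
    have : a + orderOf s ∈ R := hRadd haR hordR
    have he : a + orderOf s = n1 + 1 := by omega
    rwa [he] at this
  have hn1pos : 1 ≤ n1 := by omega
  have hmul : ∀ (k x : ℕ), x ∈ R → k * x ∈ R := by
    intro k
    induction k with
    | zero => intro x _; simpa using hR0
    | succ k ih =>
      intro x hx
      have := hRadd (ih x hx) hx
      rwa [show k * x + x = (k+1) * x by ring] at this
  have hbig : ∀ m, n1 * n1 ≤ m → m ∈ R := by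
    intro m hm
    set q := m / n1 with hq
    set r := m % n1 with hr
    have hdm : n1 * q + r = m := Nat.div_add_mod m n1
    have hrlt : r < n1 := Nat.mod_lt _ (by omega)
    have hqge : n1 ≤ q := (Nat.le_div_iff_mul_le (by omega)).mpr hm
    have hge : r ≤ q := by omega
    obtain ⟨k, hk⟩ := Nat.le.dest hge
    have he : m = r * (n1 + 1) + k * n1 := by
      rw [← hdm, ← hk]
      ring
    rw [he]
    exact hRadd (hmul r (n1+1) hn1R') (hmul k n1 hn1R)
  choose f hf using hreach
  refine ⟨n1 * n1 + Finset.univ.sup f, ?_, ?_⟩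
  · have := Nat.mul_le_mul hn1pos hn1pos
    omega
  · intro g
    have hfg : f g ≤ Finset.univ.sup f := Finset.le_sup (Finset.mem_univ g)
    set N := n1 * n1 + Finset.univ.sup f with hN
    have hkey : n1 * n1 ≤ N - f g := by omega
    have hpos : 0 < convPow μ (f g + (N - f g)) (g * 1) :=
      pos_mul hnonneg (hf g) (hbig _ hkey)
    rwa [mul_one, Nat.add_sub_cancel' (by omega)] at hpos

end Pos

theorem tendsto_uniform_of_pos {μ : G → ℝ} (hnonneg : ∀ g, 0 ≤ μ g) (hsum : ∑ g, μ g = 1)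
    {N : ℕ} (hN1 : 1 ≤ N) (hNpos : ∀ g : G, 0 < convPow μ N g) (g : G) :
    Filter.Tendsto (fun n : ℕ => convPow μ n g) Filter.atTop
      (nhds (1 / (Fintype.card G : ℝ))) := by
  classical
  have hne : (Finset.univ : Finset G).Nonempty := ⟨1, Finset.mem_univ 1⟩
  have hcardpos : 0 < Fintype.card G := Fintype.card_pos_iff.mpr ⟨1⟩
  have hcard : 0 < (Fintype.card G : ℝ) := by exact_mod_cast hcardpos
  set u : ℝ := 1 / (Fintype.card G : ℝ) with hu
  have hupos : 0 < u := by positivity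
  set ε : ℝ := Finset.univ.inf' hne (convPow μ N) with hε
  have hεpos : 0 < ε := by
    rw [hε, Finset.lt_inf'_iff]
    exact fun b _ => hNpos b
  have hεle : ∀ h : G, ε ≤ convPow μ N h := fun h => Finset.inf'_le _ (Finset.mem_univ h)
  have hsumN : ∑ h, convPow μ N h = 1 := sum_convPow hsum N
  have hc1 : (Fintype.card G : ℝ) * ε ≤ 1 := by
    have := Finset.card_nsmul_le_sum Finset.univ (convPow μ N) ε (fun i _ => hεle i)
    rw [hsumN] at this
    simpa [nsmul_eq_mul, Finset.card_univ] using this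
  set r : ℝ := 1 - (Fintype.card G : ℝ) * ε with hrdef
  have hr0 : 0 ≤ r := by rw [hrdef]; linarith
  have hr1 : r < 1 := by
    have : 0 < (Fintype.card G : ℝ) * ε := by positivity
    rw [hrdef]; linarith
  set D : ℕ → ℝ := fun n => Finset.univ.sup' hne (fun x => |convPow μ n x - u|) with hD
  have hDge : ∀ (n : ℕ) (x : G), |convPow μ n x - u| ≤ D n := by
    intro n x
    rw [hD]
    exact Finset.le_sup' (fun x => |convPow μ n x - u|) (Finset.mem_univ x)
  have hsup_le : ∀ (n : ℕ) (c : ℝ), (∀ x : G, |convPow μ n x - u| ≤ c) → D n ≤ c := by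
    intro n c h
    rw [hD]
    exact Finset.sup'_le hne (fun x => |convPow μ n x - u|) (fun x _ => h x)
  have hD0 : ∀ n, 0 ≤ D n := fun n => le_trans (abs_nonneg _) (hDge n 1)
  have hmono : ∀ n, D (n + 1) ≤ D n := by
    intro n
    apply hsup_le
    intro x
    have hrew : convPow μ (n+1) x - u = ∑ h, μ h * (convPow μ n (h⁻¹ * x) - u) := by
      rw [convPow_succ]
      rw [Finset.sum_congr rfl (fun h _ => mul_sub (μ h) (convPow μ n (h⁻¹ * x)) u)]
      rw [Finset.sum_sub_distrib, ← Finset.sum_mul, hsum, one_mul]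
    calc |convPow μ (n+1) x - u| = |∑ h, μ h * (convPow μ n (h⁻¹*x) - u)| := by rw [hrew]
      _ ≤ ∑ h, |μ h * (convPow μ n (h⁻¹*x) - u)| := Finset.abs_sum_le_sum_abs _ _
      _ ≤ ∑ h, μ h * D n := Finset.sum_le_sum (fun h _ => by
            rw [abs_mul, abs_of_nonneg (hnonneg h)]
            exact mul_le_mul_of_nonneg_left (hDge n _) (hnonneg h))
      _ = D n := by rw [← Finset.sum_mul, hsum, one_mul]
  have hAnti : Antitone D := antitone_nat_of_succ_le hmono
  have hcontr : ∀ n, D (N + n) ≤ r * D n := by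
    intro n
    apply hsup_le
    intro x
    have hsum1 : ∑ h : G, convPow μ n (h⁻¹ * x) = 1 := by
      rw [show ∑ h : G, convPow μ n (h⁻¹ * x) = ∑ h, convPow μ n h from
        Equiv.sum_comp ((Equiv.inv G).trans (Equiv.mulRight x)) (convPow μ n)]
      exact sum_convPow hsum n
    have e1 : ∑ h : G, convPow μ N h * convPow μ n (h⁻¹ * x) = convPow μ (N + n) x :=
      (convPow_add μ N n x).symm
    have e2 : ∑ h : G, convPow μ N h * u = u := by rw [← Finset.sum_mul, hsumN, one_mul]
    have e3 : ∑ h : G, ε * convPow μ n (h⁻¹ * x) = ε := by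
      rw [← Finset.mul_sum, hsum1, mul_one]
    have e4 : ∑ _h : G, ε * u = ε := by
      rw [Finset.sum_const, Finset.card_univ, nsmul_eq_mul, hu]
      field_simp
    have hrew : ∑ h, (convPow μ N h - ε) * (convPow μ n (h⁻¹ * x) - u)
        = convPow μ (N + n) x - u := by
      have hexp : ∀ h : G, (convPow μ N h - ε) * (convPow μ n (h⁻¹ * x) - u)
          = convPow μ N h * convPow μ n (h⁻¹ * x) - convPow μ N h * u
            - ε * convPow μ n (h⁻¹ * x) + ε * u := by
        intro h; ring
      rw [Finset.sum_congr rfl fun h _ => hexp h]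
      rw [Finset.sum_add_distrib, Finset.sum_sub_distrib, Finset.sum_sub_distrib, e1, e2, e3, e4]
      ring
    have hsumr : ∑ h : G, (convPow μ N h - ε) = r := by
      rw [Finset.sum_sub_distrib, hsumN, Finset.sum_const, Finset.card_univ, nsmul_eq_mul, hrdef]
    calc |convPow μ (N+n) x - u|
        = |∑ h, (convPow μ N h - ε) * (convPow μ n (h⁻¹*x) - u)| := by rw [hrew]
      _ ≤ ∑ h, |(convPow μ N h - ε) * (convPow μ n (h⁻¹*x) - u)| := Finset.abs_sum_le_sum_abs _ _
      _ ≤ ∑ h, (convPow μ N h - ε) * D n := Finset.sum_le_sum (fun h _ => by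
            rw [abs_mul, abs_of_nonneg (sub_nonneg.mpr (hεle h))]
            exact mul_le_mul_of_nonneg_left (hDge n _) (sub_nonneg.mpr (hεle h)))
      _ = r * D n := by rw [← Finset.sum_mul, hsumr]
  have hiter : ∀ k, D (N * k) ≤ r ^ k * D 0 := by
    intro k
    induction k with
    | zero => simp
    | succ k ih =>
      have he : N * (k+1) = N + N * k := by ring
      rw [he]
      calc D (N + N*k) ≤ r * D (N*k) := hcontr _
        _ ≤ r * (r^k * D 0) := mul_le_mul_of_nonneg_left ih hr0
        _ = r^(k+1) * D 0 := by ring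
  have hbound : ∀ n, D n ≤ r ^ (n / N) * D 0 := by
    intro n
    calc D n ≤ D (N * (n / N)) := hAnti (by rw [mul_comm]; exact Nat.div_mul_le_self n N)
      _ ≤ r ^ (n/N) * D 0 := hiter _
  have hdiv : Filter.Tendsto (fun n : ℕ => n / N) Filter.atTop Filter.atTop := by
    apply Filter.tendsto_atTop_atTop.mpr
    intro b
    exact ⟨b * N, fun n hn => (Nat.le_div_iff_mul_le (by omega)).mpr hn⟩
  have hrpow : Filter.Tendsto (fun n : ℕ => r ^ (n / N) * D 0) Filter.atTop (nhds 0) := by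
    have h0 : Filter.Tendsto (fun k : ℕ => r ^ k) Filter.atTop (nhds 0) :=
      tendsto_pow_atTop_nhds_zero_of_lt_one hr0 hr1
    have := (h0.comp hdiv).mul_const (D 0)
    simpa using this
  have habs : Filter.Tendsto (fun n => |convPow μ n g - u|) Filter.atTop (nhds 0) :=
    squeeze_zero (fun n => abs_nonneg _) (fun n => le_trans (hDge n g) (hbound n)) hrpow
  rw [tendsto_iff_norm_sub_tendsto_zero]
  simpa [Real.norm_eq_abs] using habs

end RWAux

/-- Poincaré card shuffling: if the support of a probability measure `μ` on a finite
group `G` generates `G` and is not contained in a coset of a proper normal subgroup,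
then the convolution powers `μ^{*n}` converge to the uniform distribution on `G`. -/
theorem random_walk_on_group_converges_to_uniform
    {G : Type*} [Group G] [Fintype G] [DecidableEq G]
    (μ : G → ℝ) (hnonneg : ∀ g, 0 ≤ μ g) (hsum : ∑ g, μ g = 1)
    (hgen : Subgroup.closure (Function.support μ) = ⊤)
    (hcoset : ¬ ∃ (H : Subgroup G), H.Normal ∧ H ≠ ⊤ ∧
      ∃ g : G, Function.support μ ⊆ (fun h => g * h) '' (H : Set G)) :
    ∀ g : G, Tendsto (fun n : ℕ => convPow μ n g) atTop
      (𝓝 (1 / (Fintype.card G : ℝ))) := by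
  obtain ⟨N, hN1, hNpos⟩ := RWAux.exists_pos_N hnonneg hsum hgen hcoset
  exact fun g => RWAux.tendsto_uniform_of_pos hnonneg hsum hN1 hNpos g
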